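/- Let n be a positive integer, s coprime to n, C = S^s, and D diagonal with unit-modulus entries a_i. With B the diagonal matrix B_{k,k} = λ_0^k / ∏_{l=0}^{k−1} a_{sl} (λ_0 an n-th root of ∏ a_i), F the unitary Fourier matrix F_{k,l} = ω^{kl}/√n, and Π_s the permutation matrix with (Π_s)_{si,i} = 1, the matrix U = Π_s B F is unitary and U* (DC) U is the diagonal matrix with (j,j) entry ω^j λ_0. -/

import Mathlib

open Matrix

/-- `ω n = e^{2πi/n}`. -/
noncomputable def omg (n : ℕ) : ℂ := Complex.exp (2 * Real.pi * Complex.I / n)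

/-- The cyclic shift matrix: `S_{i,j} = 1` iff `i + 1 = j` in `ZMod n`. -/
noncomputable def Smat (n : ℕ) : Matrix (ZMod n) (ZMod n) ℂ :=
  Matrix.of fun i j => if i + 1 = j then 1 else 0

/-- The diagonal matrix `R` with `R_{j,j} = ω^j`. -/
noncomputable def Rmat (n : ℕ) : Matrix (ZMod n) (ZMod n) ℂ :=
  Matrix.diagonal fun j => omg n ^ (j.val)

/-- The permutation matrix `Π_s`, with `(Π_s)_{s i, i} = 1`. -/
noncomputable def Pmat (n : ℕ) (s : ℕ) : Matrix (ZMod n) (ZMod n) ℂ :=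
  Matrix.of fun i j => if i = (s : ZMod n) * j then 1 else 0

/-- The unitary Fourier matrix `F_{k,l} = ω^{kl}/√n`. -/
noncomputable def Fmat (n : ℕ) : Matrix (ZMod n) (ZMod n) ℂ :=
  Matrix.of fun k l => omg n ^ (k.val * l.val) / Real.sqrt n

lemma omg_prim (n : ℕ) [NeZero n] : IsPrimitiveRoot (omg n) n :=
  Complex.isPrimitiveRoot_exp n (NeZero.ne n)

lemma omg_pow_n (n : ℕ) [NeZero n] : omg n ^ n = 1 := (omg_prim n).pow_eq_one

lemma omg_pow_mod (n : ℕ) [NeZero n] (m : ℕ) : omg n ^ m = omg n ^ (m % n) := by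
  conv_lhs => rw [← Nat.div_add_mod m n]
  rw [pow_add, pow_mul, omg_pow_n, one_pow, one_mul]

lemma omg_pow_congr (n : ℕ) [NeZero n] {a b : ℕ} (h : a ≡ b [MOD n]) :
    omg n ^ a = omg n ^ b := by
  rw [omg_pow_mod, h, ← omg_pow_mod]

lemma omg_abs (n : ℕ) : ‖omg n‖ = 1 := by
  rw [omg, Complex.norm_exp]
  have : (2 * Real.pi * Complex.I / n).re = 0 := by
    simp [Complex.div_re]
  rw [this, Real.exp_zero]

lemma omg_conj (n : ℕ) : (starRingEnd ℂ) (omg n) = (omg n)⁻¹ := by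
  have h0 : omg n ≠ 0 := Complex.exp_ne_zero _
  field_simp
  rw [mul_comm, Complex.mul_conj, Complex.normSq_eq_norm_sq, omg_abs]
  norm_num

lemma zmod_sum (n : ℕ) [NeZero n] (g : ℕ → ℂ) :
    ∑ x : ZMod n, g x.val = ∑ l ∈ Finset.range n, g l := by
  refine Finset.sum_nbij' (fun x => x.val) (fun l => (l : ZMod n)) ?_ ?_ ?_ ?_ ?_ <;>
    simp [ZMod.val_lt, ZMod.natCast_val, ZMod.val_natCast, Nat.mod_eq_of_lt]
  · intro a ha; exact Nat.mod_eq_of_lt ha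

lemma zmod_prod (n : ℕ) [NeZero n] (g : ℕ → ℂ) :
    ∏ x : ZMod n, g x.val = ∏ l ∈ Finset.range n, g l := by
  refine Finset.prod_nbij' (fun x => x.val) (fun l => (l : ZMod n)) ?_ ?_ ?_ ?_ ?_ <;>
    simp [ZMod.val_lt]
  · intro a ha; exact Nat.mod_eq_of_lt ha

lemma geom_zmod (n : ℕ) [NeZero n] (z : ℂ) (hz : z ^ n = 1) :
    ∑ m : ZMod n, z ^ m.val = if z = 1 then (n : ℂ) else 0 := by
  rw [zmod_sum]
  split_ifs with h
  · simp [h]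
  · rw [geom_sum_eq h, hz]
    simp

lemma Smat_pow (n : ℕ) [NeZero n] (s : ℕ) :
    Smat n ^ s = Matrix.of fun i j : ZMod n => if i + (s : ZMod n) = j then 1 else 0 := by
  induction s with
  | zero => ext i j; simp [Matrix.one_apply]
  | succ m ih =>
    ext i j
    rw [pow_succ, ih]
    simp only [Matrix.mul_apply, Matrix.of_apply, Smat, boole_mul]
    rw [Finset.sum_ite_eq (Finset.univ) (i + (m : ZMod n))]
    simp [add_assoc]

lemma Fmat_unitary (n : ℕ) [NeZero n] : Fmat n ∈ Matrix.unitaryGroup (ZMod n) ℂ := by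
  rw [Matrix.mem_unitaryGroup_iff']
  ext k l
  have hn0 : (n : ℝ) ≠ 0 := Nat.cast_ne_zero.mpr (NeZero.ne n)
  have homg : omg n ≠ 0 := Complex.exp_ne_zero _
  have hsq : (Real.sqrt n : ℂ) * (Real.sqrt n : ℂ) = (n : ℂ) := by
    rw [← Complex.ofReal_mul, Real.mul_self_sqrt (Nat.cast_nonneg n)]
    simp
  rw [Matrix.mul_apply]
  simp only [Matrix.star_apply, Fmat, Matrix.of_apply, star_div₀, star_pow, RCLike.star_def,
    omg_conj, Complex.conj_ofReal]
  have key : ∀ m : ZMod n, (omg n)⁻¹ ^ (m.val * k.val) / (Real.sqrt n : ℂ) *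
      (omg n ^ (m.val * l.val) / (Real.sqrt n : ℂ)) =
      ((omg n)⁻¹ ^ k.val * omg n ^ l.val) ^ m.val / n := by
    intro m
    rw [div_mul_div_comm, hsq, mul_pow, ← pow_mul, ← pow_mul]
    ring_nf
  rw [Finset.sum_congr rfl fun m _ => key m, ← Finset.sum_div]
  set z : ℂ := (omg n)⁻¹ ^ k.val * omg n ^ l.val with hz
  have hzn : z ^ n = 1 := by
    rw [hz, mul_pow, inv_pow, inv_pow, ← pow_mul, ← pow_mul, mul_comm k.val n, mul_comm l.val n,
      pow_mul, pow_mul, omg_pow_n, one_pow, one_pow, inv_one, one_mul]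
  rw [geom_zmod n z hzn]
  have hz1 : z = 1 ↔ k = l := by
    rw [hz, inv_pow, inv_mul_eq_one₀ (pow_ne_zero _ homg)]
    constructor
    · intro h
      exact (ZMod.val_injective n ((omg_prim n).pow_inj k.val_lt l.val_lt h)).symm ▸ rfl
    · rintro rfl; rfl
  by_cases h : k = l
  · simp [h, Matrix.one_apply, hz1.mpr h, div_self (Nat.cast_ne_zero.mpr (NeZero.ne n) : (n:ℂ) ≠ 0)]
  · have : z ≠ 1 := fun hh => h (hz1.mp hh)
    simp [h, Matrix.one_apply, this]

lemma Pmat_unitary (n : ℕ) [NeZero n] (s : ℕ) (hs : Nat.Coprime s n) :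
    Pmat n s ∈ Matrix.unitaryGroup (ZMod n) ℂ := by
  rw [Matrix.mem_unitaryGroup_iff']
  ext j j'
  set u := ZMod.unitOfCoprime s hs with hu
  have hcu : (u : ZMod n) = s := ZMod.coe_unitOfCoprime s hs
  rw [Matrix.mul_apply]
  simp only [Matrix.star_apply, Pmat, Matrix.of_apply]
  rw [Finset.sum_eq_single ((s : ZMod n) * j)]
  · rw [if_pos rfl, star_one, one_mul, Matrix.one_apply]
    by_cases h : j = j'
    · simp [h]
    · rw [if_neg (fun hh => h (by rwa [← hcu, Units.mul_right_inj] at hh)), if_neg h]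
  · intro i _ hne
    rw [if_neg (fun h => hne h), star_zero, zero_mul]
  · intro h; exact absurd (Finset.mem_univ _) h

lemma diag_unitary (n : ℕ) [NeZero n] (b : ZMod n → ℂ) (hb : ∀ k, ‖b k‖ = 1) :
    Matrix.diagonal b ∈ Matrix.unitaryGroup (ZMod n) ℂ := by
  have key : ∀ k, star (b k) * b k = 1 := fun k => by
    rw [RCLike.star_def, ← Complex.normSq_eq_conj_mul_self, Complex.normSq_eq_norm_sq, hb, one_pow,
      Complex.ofReal_one]
  rw [Matrix.mem_unitaryGroup_iff', Matrix.star_eq_conjTranspose, Matrix.diagonal_conjTranspose,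
    Matrix.diagonal_mul_diagonal]
  simp only [Pi.star_apply, key, Matrix.diagonal_one]

lemma abs_eq_one_of_pow (n : ℕ) [NeZero n] (x : ℝ) (hx : 0 ≤ x) (h : x ^ n = 1) : x = 1 :=
  (pow_left_strictMonoOn₀ (NeZero.ne n)).injOn (Set.mem_Ici.mpr hx) (Set.mem_Ici.mpr zero_le_one)
    (by rw [h, one_pow])

lemma prod_shift (n : ℕ) [NeZero n] (s : ℕ) (hs : Nat.Coprime s n) (a : ZMod n → ℂ) :
    ∏ l ∈ Finset.range n, a ((s : ZMod n) * l) = ∏ i, a i := by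
  rw [← zmod_prod n (fun m => a ((s : ZMod n) * m))]
  have h1 : ∏ x : ZMod n, a ((s : ZMod n) * (x.val : ZMod n)) = ∏ x : ZMod n, a ((s : ZMod n) * x) := by
    apply Fintype.prod_congr
    intro x
    congr 1
    rw [ZMod.natCast_val, ZMod.cast_id]
  rw [h1]
  exact Fintype.prod_bijective _ (Units.mulLeft (ZMod.unitOfCoprime s hs)).bijective _ _
    (fun x => by rw [Units.mulLeft]; simp [ZMod.coe_unitOfCoprime])

theorem stmt8 (n : ℕ) [NeZero n] (s : ℕ) (hs : Nat.Coprime s n)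
    (a : ZMod n → ℂ) (ha : ∀ i, ‖a i‖ = 1)
    (lam0 : ℂ) (hlam : lam0 ^ n = ∏ i, a i)
    (B : Matrix (ZMod n) (ZMod n) ℂ)
    (hB : B = Matrix.diagonal fun k : ZMod n =>
      lam0 ^ k.val / ∏ l ∈ Finset.range k.val, a ((s : ZMod n) * l)) :
    Pmat n s * B * Fmat n ∈ Matrix.unitaryGroup (ZMod n) ℂ ∧
      (Pmat n s * B * Fmat n)ᴴ * (Matrix.diagonal a * Smat n ^ s) *
          (Pmat n s * B * Fmat n) =
        Matrix.diagonal fun j : ZMod n => omg n ^ j.val * lam0 := by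
  set b : ZMod n → ℂ := fun k : ZMod n =>
    lam0 ^ k.val / ∏ l ∈ Finset.range k.val, a ((s : ZMod n) * l) with hb
  set u := ZMod.unitOfCoprime s hs with hu
  have hcu : (u : ZMod n) = s := ZMod.coe_unitOfCoprime s hs
  have ha0 : ∀ i, a i ≠ 0 := fun i h => by
    have := ha i; rw [h] at this; simp at this
  have hP0 : ∀ m : ℕ, (∏ l ∈ Finset.range m, a ((s : ZMod n) * l)) ≠ 0 :=
    fun m => Finset.prod_ne_zero_iff.mpr fun _ _ => ha0 _
  have habs_lam : ‖lam0‖ = 1 := by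
    apply abs_eq_one_of_pow n _ (norm_nonneg _)
    rw [← norm_pow, hlam, norm_prod]
    simp [ha]
  have hb_abs : ∀ k, ‖b k‖ = 1 := by
    intro k
    rw [hb]
    simp only [norm_div, norm_pow, norm_prod, habs_lam, ha, one_pow]
    simp
  have hUmem : Pmat n s * B * Fmat n ∈ Matrix.unitaryGroup (ZMod n) ℂ := by
    rw [hB]
    exact mul_mem (mul_mem (Pmat_unitary n s hs) (diag_unitary n b hb_abs)) (Fmat_unitary n)
  have hk' : ∀ k : ZMod n, ((k.val : ℕ) : ZMod n) = k := fun k => by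
    rw [ZMod.natCast_val, ZMod.cast_id]
  -- key recursion
  have klem : ∀ k : ZMod n, a ((s : ZMod n) * k) * b (k + 1) = lam0 * b k := by
    intro k
    rcases lt_or_eq_of_le (Nat.succ_le_of_lt k.val_lt) with hlt | heq <;>
      rw [Nat.succ_eq_add_one] at *
    · have h1 : (k + 1 : ZMod n) = ((k.val + 1 : ℕ) : ZMod n) := by
        rw [Nat.cast_add, Nat.cast_one, hk' k]
      have hv : (k + 1).val = k.val + 1 := by rw [h1, ZMod.val_natCast, Nat.mod_eq_of_lt hlt]
      simp only [hb, hv, Finset.prod_range_succ, hk' k]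
      rw [pow_succ]
      have hak : a ((s : ZMod n) * k) ≠ 0 := ha0 _
      rw [mul_div_assoc', mul_div_assoc',
        div_eq_div_iff (mul_ne_zero (hP0 _) hak) (hP0 _)]
      ring
    · have h1 : (k + 1 : ZMod n) = 0 := by
        rw [← hk' k, ← Nat.cast_one, ← Nat.cast_add, heq, ZMod.natCast_self]
      rw [h1]
      simp only [hb, ZMod.val_zero, pow_zero, Finset.range_zero, Finset.prod_empty, div_one,
        mul_one]
      have hprod : a ((s : ZMod n) * (k.val : ZMod n)) *
          (∏ l ∈ Finset.range k.val, a ((s : ZMod n) * l)) = lam0 ^ n := by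
        rw [mul_comm, ← Finset.prod_range_succ (fun l : ℕ => a ((s : ZMod n) * l)) k.val, heq,
          prod_shift n s hs a, ← hlam]
      rw [hk' k] at hprod
      have hpow : lam0 ^ n = lam0 ^ (k.val + 1) := by rw [heq]
      have h2 : lam0 * (lam0 ^ k.val / ∏ l ∈ Finset.range k.val, a ((s : ZMod n) * l))
          = lam0 ^ n / ∏ l ∈ Finset.range k.val, a ((s : ZMod n) * l) := by
        rw [hpow, pow_succ]
        ring
      rw [h2, eq_div_iff (hP0 k.val)]
      exact hprod
  -- entries of U
  have hUe : ∀ j l : ZMod n, (Pmat n s * B * Fmat n) j l =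
      b ((↑u⁻¹ : ZMod n) * j) * (omg n ^ (((↑u⁻¹ : ZMod n) * j).val * l.val) / Real.sqrt n) := by
    intro j l
    have hcond : ∀ k : ZMod n, (j = (s : ZMod n) * k) = ((↑u⁻¹ : ZMod n) * j = k) := by
      intro k
      rw [← hcu]
      apply propext
      constructor
      · rintro rfl; rw [← mul_assoc, Units.inv_mul, one_mul]
      · rintro rfl; rw [← mul_assoc, Units.mul_inv, one_mul]
    rw [hB, Matrix.mul_assoc, Matrix.mul_apply]
    simp only [Matrix.diagonal_mul, Pmat, Fmat, Matrix.of_apply, hcond,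
      ite_mul, one_mul, zero_mul]
    rw [Finset.sum_ite_eq Finset.univ ((↑u⁻¹ : ZMod n) * j)]
    simp [hb]
  -- commutation
  have hcomm : (Matrix.diagonal a * Smat n ^ s) * (Pmat n s * B * Fmat n) =
      (Pmat n s * B * Fmat n) * Matrix.diagonal (fun j : ZMod n => omg n ^ j.val * lam0) := by
    ext i l
    rw [Matrix.mul_apply, Matrix.mul_diagonal]
    simp only [Matrix.diagonal_mul, Smat_pow, Matrix.of_apply, mul_ite, mul_one, mul_zero,
      ite_mul, zero_mul]
    rw [Finset.sum_ite_eq Finset.univ (i + (s : ZMod n))]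
    simp only [Finset.mem_univ, if_true]
    rw [hUe, hUe]
    set k : ZMod n := (↑u⁻¹ : ZMod n) * i with hkdef
    have h2 : (↑u⁻¹ : ZMod n) * (i + (s : ZMod n)) = k + 1 := by
      rw [mul_add, ← hcu, Units.inv_mul]
    have hexp : omg n ^ ((k + 1).val * l.val) = omg n ^ (k.val * l.val) * omg n ^ l.val := by
      rw [← pow_add]
      apply omg_pow_congr
      have hmod : (k + 1).val ≡ k.val + 1 [MOD n] := by
        rw [ZMod.val_add]
        calc (k.val + (1 : ZMod n).val) % n ≡ k.val + (1 : ZMod n).val [MOD n] :=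
              Nat.mod_modEq _ n
          _ ≡ k.val + 1 [MOD n] := Nat.ModEq.add_left k.val (by
              rw [← Nat.cast_one, ZMod.val_natCast]; exact Nat.mod_modEq 1 n)
      calc (k + 1).val * l.val ≡ (k.val + 1) * l.val [MOD n] := hmod.mul_right l.val
        _ = k.val * l.val + l.val := by ring
    have hkey := klem k
    have h3 : (s : ZMod n) * k = i := by
      rw [hkdef, ← hcu, ← mul_assoc, Units.mul_inv, one_mul]
    rw [h3] at hkey
    rw [h2, hexp]
    linear_combination (omg n ^ (k.val * l.val) * omg n ^ l.val / (Real.sqrt n : ℂ)) * hkey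
  refine ⟨hUmem, ?_⟩
  have h1 : (Pmat n s * B * Fmat n)ᴴ * (Pmat n s * B * Fmat n) = 1 := by
    rw [← Matrix.star_eq_conjTranspose]
    exact Matrix.mem_unitaryGroup_iff'.mp hUmem
  calc (Pmat n s * B * Fmat n)ᴴ * (Matrix.diagonal a * Smat n ^ s) * (Pmat n s * B * Fmat n)
      = (Pmat n s * B * Fmat n)ᴴ *
        ((Matrix.diagonal a * Smat n ^ s) * (Pmat n s * B * Fmat n)) := by
        rw [Matrix.mul_assoc]
    _ = (Pmat n s * B * Fmat n)ᴴ * ((Pmat n s * B * Fmat n) *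
        Matrix.diagonal (fun j : ZMod n => omg n ^ j.val * lam0)) := by rw [hcomm]
    _ = ((Pmat n s * B * Fmat n)ᴴ * (Pmat n s * B * Fmat n)) *
        Matrix.diagonal (fun j : ZMod n => omg n ^ j.val * lam0) := by rw [← Matrix.mul_assoc]
    _ = Matrix.diagonal (fun j : ZMod n => omg n ^ j.val * lam0) := by rw [h1, one_mul]
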